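/- Let F be a C² symmetric, degree-1 homogeneous curvature function on an open convex cone Γ with F(1,…,1) = n, and let K ⊂ Γ be such that all normalized vectors κ/|κ| under consideration lie in a compact subset of Γ. Then there is a constant c = c(F, K) such that |κ|² − (1/n) F(κ)² ≤ c (|κ|² − (1/n) H(κ)²), i.e. H² − F² ≤ c Σ_{i<j} (κᵢ − κⱼ)². -/

import Mathlib

open Finset

lemma qid (n : ℕ) (x : Fin n → ℝ) :
    ∑ p ∈ Finset.univ.filter (fun p : Fin n × Fin n => p.1 < p.2), (x p.1 - x p.2) ^ 2
      = (n : ℝ) * (∑ i, x i ^ 2) - (∑ i, x i) ^ 2 := by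
  classical
  have hall : ∑ p : Fin n × Fin n, (x p.1 - x p.2) ^ 2
      = 2 * ((n : ℝ) * (∑ i, x i ^ 2) - (∑ i, x i) ^ 2) := by
    rw [← Finset.univ_product_univ, Finset.sum_product]
    have h : ∀ i j : Fin n, (x i - x j)^2 = x i^2 - 2*(x i * x j) + x j^2 := fun i j => by ring
    simp_rw [h, Finset.sum_add_distrib, Finset.sum_sub_distrib, Finset.sum_const,
      Finset.card_univ, Fintype.card_fin, ← Finset.mul_sum, ← Finset.sum_mul, nsmul_eq_mul]
    rw [sq (∑ i, x i), Finset.sum_mul]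
    ring_nf
    rw [← Finset.mul_sum]
    ring
  have hdecomp := Finset.sum_filter_add_sum_filter_not Finset.univ
    (fun p : Fin n × Fin n => p.1 < p.2) (fun p => (x p.1 - x p.2) ^ 2)
  have h2 : ∑ p ∈ Finset.univ.filter (fun p : Fin n × Fin n => ¬ p.1 < p.2), (x p.1 - x p.2) ^ 2
      = ∑ p ∈ Finset.univ.filter (fun p : Fin n × Fin n => p.2 < p.1), (x p.1 - x p.2) ^ 2 := by
    refine (Finset.sum_subset ?_ ?_).symm
    · intro p hp
      simp only [Finset.mem_filter, Finset.mem_univ, true_and] at hp ⊢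
      exact not_lt_of_gt hp
    · intro p hp hnp
      simp only [Finset.mem_filter, Finset.mem_univ, true_and] at hp hnp
      have : p.1 = p.2 := le_antisymm (not_lt.mp hnp) (not_lt.mp hp)
      simp [this]
  have h3 : ∑ p ∈ Finset.univ.filter (fun p : Fin n × Fin n => p.2 < p.1), (x p.1 - x p.2) ^ 2
      = ∑ p ∈ Finset.univ.filter (fun p : Fin n × Fin n => p.1 < p.2), (x p.1 - x p.2) ^ 2 := by
    refine Finset.sum_nbij' Prod.swap Prod.swap ?_ ?_ ?_ ?_ ?_
    · intro p hp; simp only [Finset.mem_filter, Finset.mem_univ, true_and] at hp ⊢; exact hp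
    · intro p hp; simp only [Finset.mem_filter, Finset.mem_univ, true_and] at hp ⊢; exact hp
    · intro p _; simp
    · intro p _; simp
    · intro p _; simp [Prod.swap]; ring
  rw [h2, h3] at hdecomp
  linarith [hdecomp, hall]

lemma fderiv_phi_diag (n : ℕ) (hn : 0 < n)
    (Γ : Set (Fin n → ℝ)) (hΓopen : IsOpen Γ)
    (hΓcone : ∀ c : ℝ, 0 < c → ∀ κ ∈ Γ, c • κ ∈ Γ)
    (hΓone : (fun _ => (1 : ℝ)) ∈ Γ)
    (F : (Fin n → ℝ) → ℝ) (hF : ContDiffOn ℝ 2 F Γ)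
    (hsym : ∀ (σ : Equiv.Perm (Fin n)) (κ : Fin n → ℝ), κ ∈ Γ → F (κ ∘ σ) = F κ)
    (hhom : ∀ c : ℝ, 0 < c → ∀ κ ∈ Γ, F (c • κ) = c * F κ)
    (hnorm : F (fun _ => 1) = n)
    (s : ℝ) (hs : 0 < s) (hyΓ : (fun _ : Fin n => s) ∈ Γ) :
    fderiv ℝ (fun x : Fin n → ℝ => (∑ i, x i) ^ 2 - F x ^ 2) (fun _ => s) = 0 := by
  classical
  set y : Fin n → ℝ := fun _ => s with hy
  have hysmul : y = s • (fun _ : Fin n => (1 : ℝ)) := by funext i; simp [hy]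
  have hFy : F y = s * n := by rw [hysmul, hhom s hs _ hΓone, hnorm]
  have hdF : ∀ z ∈ Γ, DifferentiableAt ℝ F z := fun z hz =>
    (hF.contDiffAt (hΓopen.mem_nhds hz)).differentiableAt two_ne_zero
  set D : (Fin n → ℝ) →L[ℝ] ℝ := fderiv ℝ F y with hD
  -- Euler: D y = F y
  have euler : D y = F y := by
    have hy1 : HasDerivAt (fun t : ℝ => t • y) y 1 := by
      simpa using (hasDerivAt_id (1 : ℝ)).smul_const y
    have hFd : HasFDerivAt F D ((1 : ℝ) • y) := by
      rw [one_smul]; exact (hdF y hyΓ).hasFDerivAt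
    have h1 : HasDerivAt (fun t : ℝ => F (t • y)) (D y) 1 := hFd.comp_hasDerivAt 1 hy1
    have h2 : (fun t : ℝ => F (t • y)) =ᶠ[nhds 1] fun t => t * F y := by
      filter_upwards [eventually_gt_nhds zero_lt_one] with t ht
      exact hhom t ht y hyΓ
    have h3 : HasDerivAt (fun t : ℝ => t * F y) (D y) 1 :=
      h1.congr_of_eventuallyEq h2.symm
    exact h3.unique (hasDerivAt_mul_const (F y))
  -- symmetry: D ∘ Pσ = D
  have hperm : ∀ σ : Equiv.Perm (Fin n), ∀ v : Fin n → ℝ, D (v ∘ σ) = D v := by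
    intro σ v
    set P : (Fin n → ℝ) →L[ℝ] (Fin n → ℝ) :=
      ContinuousLinearMap.pi (fun i => ContinuousLinearMap.proj (σ i)) with hP
    have hPapp : ∀ w : Fin n → ℝ, P w = w ∘ σ := fun w => rfl
    have hPy : P y = y := by funext i; rfl
    have hFd : HasFDerivAt F D (P y) := by rw [hPy]; exact (hdF y hyΓ).hasFDerivAt
    have h1 : HasFDerivAt (fun x => F (P x)) (D.comp P) y :=
      hFd.comp y P.hasFDerivAt
    have hGF : (fun x => F (P x)) =ᶠ[nhds y] F := by
      filter_upwards [hΓopen.mem_nhds hyΓ] with x hx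
      exact hsym σ x hx
    have h2 : HasFDerivAt F (D.comp P) y := h1.congr_of_eventuallyEq hGF.symm
    have h3 : D.comp P = D := h2.unique (hdF y hyΓ).hasFDerivAt
    calc D (v ∘ σ) = (D.comp P) v := by rw [ContinuousLinearMap.comp_apply, hPapp]
    _ = D v := by rw [h3]
  -- components of D are all 1
  have hone : (fun _ : Fin n => (1 : ℝ)) = ∑ i : Fin n, Pi.single i (1 : ℝ) := by
    funext j
    rw [Finset.sum_apply]
    simp [Pi.single_apply]
  have hDone : D (fun _ : Fin n => (1 : ℝ)) = n := by
    have h1 : D y = s * n := euler.trans hFy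
    have h2 : D y = s * D (fun _ : Fin n => (1 : ℝ)) := by
      rw [hysmul, map_smul]; simp
    have h3 : s * (n:ℝ) = s * D (fun _ : Fin n => (1:ℝ)) := h1.symm.trans h2
    exact (mul_left_cancel₀ hs.ne' h3).symm
  have hcomp : ∀ i : Fin n, D (Pi.single i 1) = 1 := by
    intro i
    have hsame : ∀ j : Fin n, D (Pi.single j 1) = D (Pi.single i 1) := by
      intro j
      have hswap : (Pi.single i (1:ℝ)) ∘ (Equiv.swap i j) = Pi.single j 1 := by
        funext k
        simp only [Function.comp_apply, Pi.single_apply]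
        by_cases hki : k = i
        · rw [hki, Equiv.swap_apply_left]
          simp [eq_comm]
        · by_cases hkj : k = j
          · rw [hkj, Equiv.swap_apply_right]
            simp
          · rw [Equiv.swap_apply_of_ne_of_ne hki hkj]
            simp [hki, hkj]
      rw [← hswap, hperm]
    have hsum : ∑ j : Fin n, D (Pi.single j 1) = n := by
      rw [← map_sum, ← hone, hDone]
    rw [Finset.sum_congr rfl (fun j _ => hsame j), Finset.sum_const, Finset.card_univ,
      Fintype.card_fin, nsmul_eq_mul] at hsum
    have hn' : (n : ℝ) ≠ 0 := Nat.cast_ne_zero.mpr hn.ne'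
    have : (n:ℝ) * D (Pi.single i 1) = (n:ℝ) * 1 := by rw [hsum, mul_one]
    exact mul_left_cancel₀ hn' this
  have hDv : ∀ v : Fin n → ℝ, D v = ∑ i, v i := by
    intro v
    have hv : v = ∑ i : Fin n, (v i) • (Pi.single i 1 : Fin n → ℝ) := by
      funext j
      rw [Finset.sum_apply]
      simp [Pi.single_apply]
    conv_lhs => rw [hv]
    rw [map_sum]
    simp [hcomp]
  -- now compute fderiv of φ
  set L : (Fin n → ℝ) →L[ℝ] ℝ :=
    ∑ i : Fin n, ContinuousLinearMap.proj (R := ℝ) (φ := fun _ : Fin n => ℝ) i with hL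
  have hLapp : ∀ v : Fin n → ℝ, L v = ∑ i, v i := by
    intro v; simp [hL]
  have hDL : D = L := by
    ext1 v
    rw [hDv v, hLapp v]
  have hLd : HasFDerivAt (fun x : Fin n → ℝ => ∑ i, x i) L y := by
    have h := L.hasFDerivAt (x := y)
    have heq : ⇑L = fun x : Fin n → ℝ => ∑ i, x i := funext hLapp
    rwa [heq] at h
  have hsq1 : HasFDerivAt (fun x : Fin n → ℝ => (∑ i, x i) ^ 2)
      ((∑ i, y i) • L + (∑ i, y i) • L) y := by
    have h := hLd.mul hLd
    have heq : (fun x : Fin n → ℝ => (∑ i, x i) ^ 2)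
        = fun x : Fin n → ℝ => (∑ i, x i) * (∑ i, x i) := by funext w; rw [sq]
    rw [heq]; exact h
  have hsq2 : HasFDerivAt (fun x : Fin n → ℝ => F x ^ 2) (F y • D + F y • D) y := by
    have h := ((hdF y hyΓ).hasFDerivAt).mul ((hdF y hyΓ).hasFDerivAt)
    have heq : (fun x : Fin n → ℝ => F x ^ 2) = fun x => F x * F x := by funext w; rw [sq]
    rw [heq]; exact h
  have hsub := hsq1.sub hsq2
  have hyL : (∑ i, y i) = F y := by
    rw [hFy, hy]
    simp [Finset.sum_const, Finset.card_univ, mul_comm]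
  have hzero : ((∑ i, y i) • L + (∑ i, y i) • L) - (F y • D + F y • D) = 0 := by
    rw [hyL, hDL]
    exact sub_self _
  rw [hzero] at hsub
  exact hsub.fderiv

set_option maxHeartbeats 1000000 in
lemma local_diag (n : ℕ) (hn : 0 < n)
    (Γ : Set (Fin n → ℝ)) (hΓopen : IsOpen Γ)
    (hΓcone : ∀ c : ℝ, 0 < c → ∀ κ ∈ Γ, c • κ ∈ Γ)
    (hΓone : (fun _ => (1 : ℝ)) ∈ Γ)
    (F : (Fin n → ℝ) → ℝ) (hF : ContDiffOn ℝ 2 F Γ)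
    (hsym : ∀ (σ : Equiv.Perm (Fin n)) (κ : Fin n → ℝ), κ ∈ Γ → F (κ ∘ σ) = F κ)
    (hhom : ∀ c : ℝ, 0 < c → ∀ κ ∈ Γ, F (c • κ) = c * F κ)
    (hnorm : F (fun _ => 1) = n)
    (u : Fin n → ℝ) (huΓ : u ∈ Γ) (r : ℝ) (hr : 0 < r) (hu : u = fun _ => r) :
    ∃ c : ℝ, ∃ V ∈ nhds u, ∀ x ∈ V,
      (∑ i, x i) ^ 2 - F x ^ 2 ≤ c * ((n : ℝ) * (∑ i, x i ^ 2) - (∑ i, x i) ^ 2) := by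
  classical
  haveI : Nonempty (Fin n) := Fin.pos_iff_nonempty.mp hn
  have hn' : (n : ℝ) ≠ 0 := Nat.cast_ne_zero.mpr hn.ne'
  have keyalg : ∀ A B : ℝ, A - 2 * (B / n) * B + n * (B / n) ^ 2
      = ((n : ℝ) * A - B ^ 2) / n := by
    intro A B
    field_simp
    ring
  obtain ⟨ε, hε, hball⟩ := Metric.isOpen_iff.mp hΓopen u huΓ
  set ρ : ℝ := ε / 2 with hρdef
  have hρ : 0 < ρ := by positivity
  have hcb : Metric.closedBall u ρ ⊆ Γ :=
    subset_trans (Metric.closedBall_subset_ball (by simp [hρdef]; linarith)) hball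
  have hballΓ : Metric.ball u ρ ⊆ Γ := subset_trans Metric.ball_subset_closedBall hcb
  set φ : (Fin n → ℝ) → ℝ := fun x => (∑ i, x i) ^ 2 - F x ^ 2 with hφdef
  have hsumCD : ContDiff ℝ 2 (fun x : Fin n → ℝ => ∑ i, x i) := by
    exact ContDiff.sum fun i _ => (ContinuousLinearMap.proj
      (R := ℝ) (φ := fun _ : Fin n => ℝ) i).contDiff
  have hφ : ContDiffOn ℝ 2 φ Γ := ((hsumCD.pow 2).contDiffOn).sub (hF.pow 2)
  set φ' : (Fin n → ℝ) → (Fin n → ℝ) →L[ℝ] ℝ := fderiv ℝ φ with hφ'def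
  have hφ'1 : ContDiffOn ℝ 1 φ' Γ := hφ.fderiv_of_isOpen hΓopen (by norm_num)
  have hφ'' : ContinuousOn (fderiv ℝ φ') Γ :=
    hφ'1.continuousOn_fderiv_of_isOpen hΓopen le_rfl
  obtain ⟨M, hM⟩ := (isCompact_closedBall u ρ).exists_bound_of_continuousOn (f := fderiv ℝ φ') (hφ''.mono hcb)
  have hM0 : 0 ≤ M :=
    le_trans (norm_nonneg _) (hM u (Metric.mem_closedBall_self hρ.le))
  have hdφ : ∀ z ∈ Γ, DifferentiableAt ℝ φ z := fun z hz =>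
    (hφ.contDiffAt (hΓopen.mem_nhds hz)).differentiableAt two_ne_zero
  have hdφ' : ∀ z ∈ Γ, DifferentiableAt ℝ φ' z := fun z hz =>
    (hφ'1.contDiffAt (hΓopen.mem_nhds hz)).differentiableAt one_ne_zero
  have hlip : ∀ z ∈ Metric.ball u ρ, ∀ w ∈ Metric.ball u ρ,
      ‖φ' w - φ' z‖ ≤ M * ‖w - z‖ := by
    intro z hz w hw
    exact (convex_ball u ρ).norm_image_sub_le_of_norm_hasFDerivWithin_le
      (fun a ha => ((hdφ' a (hballΓ ha)).hasFDerivAt).hasFDerivWithinAt)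
      (fun a ha => hM a (Metric.ball_subset_closedBall ha)) hz hw
  set δ : ℝ := min (ρ / 2) (r / 2) with hδdef
  have hδ : 0 < δ := lt_min (by positivity) (by positivity)
  refine ⟨M / n, Metric.ball u δ, Metric.ball_mem_nhds u hδ, ?_⟩
  intro x hx
  set s : ℝ := (∑ i, x i) / n with hsdef
  set yx : Fin n → ℝ := fun _ => s with hyxdef
  have hxu : ‖x - u‖ < δ := by
    rw [← dist_eq_norm]; exact Metric.mem_ball.mp hx
  have hsr : |s - r| ≤ ‖x - u‖ := by
    have h1 : s - r = (∑ i, (x i - u i)) / n := by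
      rw [Finset.sum_sub_distrib]
      rw [hsdef, hu]
      simp [Finset.sum_const, Finset.card_univ, Fintype.card_fin, nsmul_eq_mul]
      field_simp
    have h2 : |∑ i, (x i - u i)| ≤ (n : ℝ) * ‖x - u‖ := by
      calc |∑ i, (x i - u i)| ≤ ∑ i, |x i - u i| := Finset.abs_sum_le_sum_abs _ _
      _ ≤ ∑ _i : Fin n, ‖x - u‖ := by
          refine Finset.sum_le_sum fun i _ => ?_
          have := norm_le_pi_norm (x - u) i
          simpa using this
      _ = (n : ℝ) * ‖x - u‖ := by
          simp [Finset.sum_const, Finset.card_univ, Fintype.card_fin, nsmul_eq_mul]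
    rw [h1, abs_div]
    rw [abs_of_nonneg (by positivity : (0:ℝ) ≤ (n:ℝ))]
    rw [div_le_iff₀ (by positivity : (0:ℝ) < (n:ℝ))]
    linarith [h2]
  have hspos : 0 < s := by
    have : |s - r| < r / 2 := lt_of_le_of_lt hsr (lt_of_lt_of_le hxu (min_le_right _ _))
    have := abs_lt.mp this
    linarith
  have hyxu : ‖yx - u‖ ≤ ‖x - u‖ := by
    have : yx - u = fun _ : Fin n => s - r := by funext i; simp [hyxdef, hu]
    rw [this, pi_norm_const]
    simpa using hsr
  have hxball : x ∈ Metric.ball u ρ := by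
    rw [Metric.mem_ball, dist_eq_norm]
    have : δ ≤ ρ / 2 := min_le_left _ _
    linarith
  have hyxball : yx ∈ Metric.ball u ρ := by
    rw [Metric.mem_ball, dist_eq_norm]
    have : δ ≤ ρ / 2 := min_le_left _ _
    linarith [lt_of_le_of_lt hyxu hxu]
  have hyxΓ : yx ∈ Γ := hballΓ hyxball
  have hφ'y : φ' yx = 0 :=
    fderiv_phi_diag n hn Γ hΓopen hΓcone hΓone F hF hsym hhom hnorm s hspos hyxΓ
  have hseg : segment ℝ yx x ⊆ Metric.ball u ρ :=
    (convex_ball u ρ).segment_subset hyxball hxball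
  have hbound : ∀ z ∈ segment ℝ yx x, ‖φ' z‖ ≤ M * ‖x - yx‖ := by
    intro z hz
    have hz' : z ∈ Metric.ball u ρ := hseg hz
    have h1 : ‖φ' z - φ' yx‖ ≤ M * ‖z - yx‖ := hlip yx hyxball z hz'
    rw [hφ'y, sub_zero] at h1
    have h2 : ‖z - yx‖ ≤ ‖x - yx‖ := by
      obtain ⟨a, b, ha, hb, hab, rfl⟩ := hz
      have ha' : a = 1 - b := by linarith
      subst ha'
      have heq : (1 - b) • yx + b • x - yx = b • (x - yx) := by module
      rw [heq, norm_smul, Real.norm_eq_abs, abs_of_nonneg hb]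
      have hb1 : b ≤ 1 := by linarith
      nlinarith [norm_nonneg (x - yx)]
    calc ‖φ' z‖ ≤ M * ‖z - yx‖ := h1
    _ ≤ M * ‖x - yx‖ := mul_le_mul_of_nonneg_left h2 hM0
  have hmvt : ‖φ x - φ yx‖ ≤ M * ‖x - yx‖ * ‖x - yx‖ := by
    have := (convex_segment yx x).norm_image_sub_le_of_norm_hasFDerivWithin_le
      (f := φ) (f' := φ')
      (fun z hz => ((hdφ z (hballΓ (hseg hz))).hasFDerivAt).hasFDerivWithinAt)
      hbound (left_mem_segment ℝ yx x) (right_mem_segment ℝ yx x)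
    exact this
  have hFyx : F yx = s * n := by
    have hysmul : yx = s • (fun _ : Fin n => (1 : ℝ)) := by funext i; simp [hyxdef]
    rw [hysmul, hhom s hspos _ hΓone, hnorm]
  have hsumyx : ∑ i, yx i = (n : ℝ) * s := by
    simp [hyxdef, Finset.sum_const, Finset.card_univ, Fintype.card_fin, nsmul_eq_mul]
  have hφyx : φ yx = 0 := by
    rw [hφdef]
    simp only
    rw [hsumyx, hFyx]
    ring
  have hφx : φ x ≤ M * ‖x - yx‖ ^ 2 := by
    have h1 : φ x = φ x - φ yx := by rw [hφyx, sub_zero]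
    rw [h1]
    calc φ x - φ yx ≤ ‖φ x - φ yx‖ := le_abs_self _
    _ ≤ M * ‖x - yx‖ * ‖x - yx‖ := hmvt
    _ = M * ‖x - yx‖ ^ 2 := by ring
  have hQnn : 0 ≤ ∑ i, (x i - s) ^ 2 := Finset.sum_nonneg fun i _ => sq_nonneg _
  have hw2 : ‖x - yx‖ ^ 2 ≤ ∑ i, (x i - s) ^ 2 := by
    have h1 : ‖x - yx‖ ≤ Real.sqrt (∑ i, (x i - s) ^ 2) := by
      rw [pi_norm_le_iff_of_nonneg (Real.sqrt_nonneg _)]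
      intro i
      have : ‖(x - yx) i‖ = |x i - s| := by simp [hyxdef]
      rw [this]
      refine Real.abs_le_sqrt ?_
      exact Finset.single_le_sum (fun j _ => sq_nonneg (x j - s)) (Finset.mem_univ i)
    calc ‖x - yx‖ ^ 2 ≤ Real.sqrt (∑ i, (x i - s) ^ 2) ^ 2 :=
          pow_le_pow_left₀ (norm_nonneg _) h1 2
    _ = ∑ i, (x i - s) ^ 2 := Real.sq_sqrt hQnn
  have hid : ∑ i, (x i - s) ^ 2
      = ((n : ℝ) * (∑ i, x i ^ 2) - (∑ i, x i) ^ 2) / n := by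
    have h : ∀ i, (x i - s) ^ 2 = x i ^ 2 - 2 * s * x i + s ^ 2 := fun i => by ring
    simp_rw [h]
    rw [Finset.sum_add_distrib, Finset.sum_sub_distrib, Finset.sum_const,
      Finset.card_univ, Fintype.card_fin, nsmul_eq_mul, ← Finset.mul_sum]
    rw [hsdef]
    exact keyalg _ _
  calc (∑ i, x i) ^ 2 - F x ^ 2 = φ x := rfl
  _ ≤ M * ‖x - yx‖ ^ 2 := hφx
  _ ≤ M * (((n : ℝ) * (∑ i, x i ^ 2) - (∑ i, x i) ^ 2) / n) := by
      rw [← hid]; exact mul_le_mul_of_nonneg_left hw2 hM0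
  _ = M / n * ((n : ℝ) * (∑ i, x i ^ 2) - (∑ i, x i) ^ 2) := by ring

lemma F_eq_sum_of_zero_mem (n : ℕ) (hn : 0 < n)
    (Γ : Set (Fin n → ℝ)) (hΓopen : IsOpen Γ)
    (hΓcone : ∀ c : ℝ, 0 < c → ∀ κ ∈ Γ, c • κ ∈ Γ)
    (F : (Fin n → ℝ) → ℝ) (hF : ContDiffOn ℝ 2 F Γ)
    (hsym : ∀ (σ : Equiv.Perm (Fin n)) (κ : Fin n → ℝ), κ ∈ Γ → F (κ ∘ σ) = F κ)
    (hhom : ∀ c : ℝ, 0 < c → ∀ κ ∈ Γ, F (c • κ) = c * F κ)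
    (hnorm : F (fun _ => 1) = n)
    (h0 : (0 : Fin n → ℝ) ∈ Γ) : ∀ x, F x = ∑ i, x i := by
  classical
  have huniv : Γ = Set.univ := by
    obtain ⟨ε, hε, hball⟩ := Metric.isOpen_iff.mp hΓopen 0 h0
    ext x
    simp only [Set.mem_univ, iff_true]
    by_cases hx : x = 0
    · rw [hx]; exact h0
    · have hnx : 0 < ‖x‖ := norm_pos_iff.mpr hx
      set t : ℝ := ε / (2 * ‖x‖) with htdef
      have ht : 0 < t := by positivity
      have htx : t • x ∈ Metric.ball (0 : Fin n → ℝ) ε := by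
        rw [Metric.mem_ball, dist_zero_right, norm_smul, Real.norm_eq_abs,
          abs_of_pos ht]
        have h2 : t * ‖x‖ = ε / 2 := by
          rw [htdef]
          field_simp
        rw [h2]
        linarith
      have := hΓcone t⁻¹ (inv_pos.mpr ht) _ (hball htx)
      rwa [smul_smul, inv_mul_cancel₀ ht.ne', one_smul] at this
  have hmem : ∀ x : Fin n → ℝ, x ∈ Γ := fun x => huniv ▸ Set.mem_univ x
  have hFc : ContDiff ℝ 2 F := contDiffOn_univ.mp (huniv ▸ hF)
  have hF0 : F 0 = 0 := by
    have h := hhom 2 two_pos 0 (hmem 0)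
    rw [smul_zero] at h
    linarith
  set L : (Fin n → ℝ) →L[ℝ] ℝ := fderiv ℝ F 0 with hL
  have hFlin : ∀ y : Fin n → ℝ, F y = L y := by
    intro y
    have hy1 : HasDerivAt (fun t : ℝ => t • y) y 0 := by
      simpa using (hasDerivAt_id (0 : ℝ)).smul_const y
    have hFd : HasFDerivAt F L ((0 : ℝ) • y) := by
      rw [zero_smul]
      exact ((hFc.contDiffAt).differentiableAt two_ne_zero).hasFDerivAt
    have hgd : HasDerivAt (fun t : ℝ => F (t • y)) (L y) 0 := hFd.comp_hasDerivAt 0 hy1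
    have hgd' : HasDerivWithinAt (fun t : ℝ => F (t • y)) (L y) (Set.Ici 0) 0 :=
      hgd.hasDerivWithinAt
    have heq : ∀ t ∈ Set.Ici (0:ℝ), t * F y = F (t • y) := by
      intro t ht
      rcases eq_or_lt_of_le (Set.mem_Ici.mp ht) with h | h
      · rw [← h, zero_smul, hF0, zero_mul]
      · rw [hhom t h y (hmem y)]
    have hgd2 : HasDerivWithinAt (fun t : ℝ => t * F y) (L y) (Set.Ici 0) 0 :=
      hgd'.congr heq (by rw [zero_mul, zero_smul, hF0])
    have hgd3 : HasDerivWithinAt (fun t : ℝ => t * F y) (F y) (Set.Ici 0) 0 :=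
      (hasDerivAt_mul_const (F y)).hasDerivWithinAt
    exact (((uniqueDiffOn_Ici (0:ℝ)) 0 Set.self_mem_Ici).eq_deriv _ hgd2 hgd3).symm
  -- components of L
  have hone : (fun _ : Fin n => (1 : ℝ)) = ∑ i : Fin n, Pi.single i (1:ℝ) := by
    funext j
    rw [Finset.sum_apply]
    simp [Pi.single_apply]
  have hcompeq : ∀ i j : Fin n, L (Pi.single i 1) = L (Pi.single j 1) := by
    intro i j
    have hswap : (Pi.single i (1:ℝ)) ∘ (Equiv.swap i j) = Pi.single j 1 := by
      funext k
      simp only [Function.comp_apply, Pi.single_apply]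
      by_cases hki : k = i
      · rw [hki, Equiv.swap_apply_left]
        simp [eq_comm]
      · by_cases hkj : k = j
        · rw [hkj, Equiv.swap_apply_right]
          simp
        · rw [Equiv.swap_apply_of_ne_of_ne hki hkj]
          simp [hki, hkj]
    calc L (Pi.single i 1) = F (Pi.single i 1) := (hFlin _).symm
    _ = F ((Pi.single i (1:ℝ)) ∘ (Equiv.swap i j)) := (hsym (Equiv.swap i j) _ (hmem _)).symm
    _ = F (Pi.single j 1) := by rw [hswap]
    _ = L (Pi.single j 1) := hFlin _
  have hLone : L (fun _ : Fin n => (1:ℝ)) = n := by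
    rw [← hFlin, hnorm]
  have hcomp : ∀ i : Fin n, L (Pi.single i 1) = 1 := by
    intro i
    have hsum : ∑ j : Fin n, L (Pi.single j 1) = n := by
      rw [← map_sum, ← hone, hLone]
    rw [Finset.sum_congr rfl (fun j _ => (hcompeq j i)), Finset.sum_const, Finset.card_univ,
      Fintype.card_fin, nsmul_eq_mul] at hsum
    have hn' : (n : ℝ) ≠ 0 := Nat.cast_ne_zero.mpr hn.ne'
    have h2 : (n:ℝ) * L (Pi.single i 1) = (n:ℝ) * 1 := by rw [hsum, mul_one]
    exact mul_left_cancel₀ hn' h2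
  intro x
  rw [hFlin x]
  have hv : x = ∑ i : Fin n, (x i) • (Pi.single i 1 : Fin n → ℝ) := by
    funext j
    rw [Finset.sum_apply]
    simp [Pi.single_apply]
  conv_lhs => rw [hv]
  rw [map_sum]
  simp [hcomp]

/-- for a C² symmetric degree-1 homogeneous `F` on an open convex
cone `Γ` with `F(1,…,1) = n`, and normalized curvatures confined to a compact
`K ⊆ Γ`, one has `H² − F² ≤ c ∑_{i<j} (κᵢ − κⱼ)²`. -/
theorem taylor_comparison_HF (n : ℕ) (hn : 0 < n)
    (Γ : Set (Fin n → ℝ)) (hΓopen : IsOpen Γ) (hΓconv : Convex ℝ Γ)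
    (hΓcone : ∀ c : ℝ, 0 < c → ∀ κ ∈ Γ, c • κ ∈ Γ)
    (hΓone : (fun _ => (1 : ℝ)) ∈ Γ)
    (F : (Fin n → ℝ) → ℝ) (hF : ContDiffOn ℝ 2 F Γ)
    (hsym : ∀ (σ : Equiv.Perm (Fin n)) (κ : Fin n → ℝ), κ ∈ Γ → F (κ ∘ σ) = F κ)
    (hhom : ∀ c : ℝ, 0 < c → ∀ κ ∈ Γ, F (c • κ) = c * F κ)
    (hnorm : F (fun _ => 1) = n)
    (K : Set (Fin n → ℝ)) (hK : IsCompact K) (hKΓ : K ⊆ Γ) :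
    ∃ c : ℝ, ∀ κ ∈ Γ, (Real.sqrt (∑ i, (κ i) ^ 2))⁻¹ • κ ∈ K →
      (∑ i, κ i) ^ 2 - (F κ) ^ 2
        ≤ c * ∑ p ∈ Finset.univ.filter (fun p : Fin n × Fin n => p.1 < p.2),
            (κ p.1 - κ p.2) ^ 2 := by
  classical
  by_cases h0 : (0 : Fin n → ℝ) ∈ Γ
  · refine ⟨1, fun κ hκ _ => ?_⟩
    rw [F_eq_sum_of_zero_mem n hn Γ hΓopen hΓcone F hF hsym hhom hnorm h0 κ, sub_self,
      one_mul]
    exact Finset.sum_nonneg fun p _ => sq_nonneg _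
  · -- `Γ` does not contain `0`
    have key : ∀ u ∈ K, ∃ c : ℝ, ∃ V ∈ nhds u, ∀ x ∈ V,
        (∑ i, x i) ^ 2 - F x ^ 2
          ≤ c * ((n : ℝ) * (∑ i, x i ^ 2) - (∑ i, x i) ^ 2) := by
      intro u huK
      by_cases hQ : (n : ℝ) * (∑ i, u i ^ 2) - (∑ i, u i) ^ 2 = 0
      · -- diagonal point
        have hz : ∑ p ∈ Finset.univ.filter (fun p : Fin n × Fin n => p.1 < p.2),
            (u p.1 - u p.2) ^ 2 = 0 := by rw [qid n u]; exact hQ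
        have hterm := (Finset.sum_eq_zero_iff_of_nonneg
          (fun p _ => sq_nonneg (u p.1 - u p.2))).mp hz
        have hdiag : ∀ i j : Fin n, i < j → u i = u j := by
          intro i j hij
          have h := hterm (i, j) (by simp [hij])
          have h2 : u i - u j = 0 := by
            have := sq_eq_zero_iff.mp h
            exact this
          linarith [h2]
        have hdiag' : ∀ i j : Fin n, u i = u j := by
          intro i j
          rcases lt_trichotomy i j with h | h | h
          · exact hdiag i j h
          · rw [h]
          · exact (hdiag j i h).symm
        set r : ℝ := u ⟨0, hn⟩ with hrdef
        have hu : u = fun _ => r := funext fun i => hdiag' i ⟨0, hn⟩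
        have hr : 0 < r := by
          rcases lt_trichotomy r 0 with hneg | hzero | hpos
          · exfalso
            apply h0
            have h1r : (0:ℝ) < 1 - r := by linarith
            set a : ℝ := 1 / (1 - r) with hadef
            have ha : 0 < a := by positivity
            have ha1 : a < 1 := by
              rw [hadef, div_lt_one h1r]
              linarith
            have hmem := hΓconv (hKΓ huK) hΓone ha.le (by linarith : (0:ℝ) ≤ 1 - a)
              (by ring)
            have : a • u + (1 - a) • (fun _ : Fin n => (1:ℝ)) = 0 := by
              funext i
              rw [hu]
              simp only [Pi.add_apply, Pi.smul_apply, smul_eq_mul, Pi.zero_apply]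
              rw [hadef]
              field_simp
              ring
            rwa [this] at hmem
          · exfalso
            apply h0
            have : u = 0 := by rw [hu, hzero]; funext i; rfl
            rw [← this]
            exact hKΓ huK
          · exact hpos
        exact local_diag n hn Γ hΓopen hΓcone hΓone F hF hsym hhom hnorm u
          (hKΓ huK) r hr hu
      · -- non-diagonal point
        have hQ0 : 0 ≤ (n : ℝ) * (∑ i, u i ^ 2) - (∑ i, u i) ^ 2 := by
          rw [← qid n u]
          exact Finset.sum_nonneg fun p _ => sq_nonneg _
        have hQpos : 0 < (n : ℝ) * (∑ i, u i ^ 2) - (∑ i, u i) ^ 2 :=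
          lt_of_le_of_ne hQ0 (Ne.symm hQ)
        set c : ℝ := ((∑ i, u i) ^ 2 - F u ^ 2)
          / ((n : ℝ) * (∑ i, u i ^ 2) - (∑ i, u i) ^ 2) + 1 with hcdef
        have hlt : (∑ i, u i) ^ 2 - F u ^ 2
            < c * ((n : ℝ) * (∑ i, u i ^ 2) - (∑ i, u i) ^ 2) := by
          rw [hcdef, add_mul, one_mul, div_mul_cancel₀ _ hQpos.ne']
          linarith
        have hFc : ContinuousAt F u :=
          (hF.contDiffAt (hΓopen.mem_nhds (hKΓ huK))).continuousAt
        have hsumc : Continuous fun x : Fin n → ℝ => ∑ i, x i :=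
          continuous_finset_sum _ fun i _ => continuous_apply i
        have hφc : ContinuousAt (fun x : Fin n → ℝ => (∑ i, x i) ^ 2 - F x ^ 2) u :=
          ((hsumc.pow 2).continuousAt).sub (hFc.pow 2)
        have hQc : ContinuousAt
            (fun x : Fin n → ℝ => c * ((n : ℝ) * (∑ i, x i ^ 2) - (∑ i, x i) ^ 2)) u := by
          have : Continuous fun x : Fin n → ℝ =>
              c * ((n : ℝ) * (∑ i, x i ^ 2) - (∑ i, x i) ^ 2) := by
            apply Continuous.mul continuous_const
            exact (continuous_const.mul
              (continuous_finset_sum _ fun i _ => (continuous_apply i).pow 2)).sub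
              (hsumc.pow 2)
          exact this.continuousAt
        have hev := hφc.eventually_lt hQc hlt
        exact ⟨c, {x | (∑ i, x i) ^ 2 - F x ^ 2
          < c * ((n : ℝ) * (∑ i, x i ^ 2) - (∑ i, x i) ^ 2)}, hev,
          fun x hx => le_of_lt hx⟩
    choose! c V hV hVle using key
    obtain ⟨t, htsub, htcov⟩ := hK.elim_nhds_subcover V hV
    set C : ℝ := ∑ u ∈ t, max (c u) 0 with hCdef
    have hCmono : ∀ u ∈ t, max (c u) 0 ≤ C :=
      fun u hu => Finset.single_le_sum (fun v _ => le_max_right (c v) 0) hu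
    refine ⟨C, ?_⟩
    intro κ hκΓ hκK
    have hκ0 : κ ≠ 0 := fun h => h0 (h ▸ hκΓ)
    have hsq : 0 < ∑ i, κ i ^ 2 := by
      obtain ⟨i, hi⟩ := Function.ne_iff.mp hκ0
      have h1 : κ i ^ 2 ≠ 0 := pow_ne_zero 2 hi
      have h2 : 0 < κ i ^ 2 := lt_of_le_of_ne (sq_nonneg _) (Ne.symm h1)
      exact lt_of_lt_of_le h2
        (Finset.single_le_sum (fun j _ => sq_nonneg (κ j)) (Finset.mem_univ i))
    set R : ℝ := Real.sqrt (∑ i, κ i ^ 2) with hRdef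
    have hR : 0 < R := Real.sqrt_pos.mpr hsq
    set u : Fin n → ℝ := R⁻¹ • κ with hudef
    have huK : u ∈ K := hκK
    have hκRu : κ = R • u := by
      rw [hudef, smul_smul, mul_inv_cancel₀ hR.ne', one_smul]
    obtain ⟨u', hu't, huV⟩ := Set.mem_iUnion₂.mp (htcov huK)
    have hmain := hVle u' (htsub u' hu't) u huV
    have hQu0 : 0 ≤ (n : ℝ) * (∑ i, u i ^ 2) - (∑ i, u i) ^ 2 := by
      rw [← qid n u]
      exact Finset.sum_nonneg fun p _ => sq_nonneg _
    have h1 : (∑ i, u i) ^ 2 - F u ^ 2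
        ≤ C * ((n : ℝ) * (∑ i, u i ^ 2) - (∑ i, u i) ^ 2) := by
      calc (∑ i, u i) ^ 2 - F u ^ 2
          ≤ c u' * ((n : ℝ) * (∑ i, u i ^ 2) - (∑ i, u i) ^ 2) := hmain
      _ ≤ max (c u') 0 * ((n : ℝ) * (∑ i, u i ^ 2) - (∑ i, u i) ^ 2) :=
          mul_le_mul_of_nonneg_right (le_max_left _ _) hQu0
      _ ≤ C * ((n : ℝ) * (∑ i, u i ^ 2) - (∑ i, u i) ^ 2) :=
          mul_le_mul_of_nonneg_right (hCmono u' hu't) hQu0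
    have hFκ : F κ = R * F u := by
      rw [hκRu]
      exact hhom R hR u (hKΓ huK)
    have hsumκ : ∑ i, κ i = R * ∑ i, u i := by
      rw [hκRu, Finset.mul_sum]
      exact Finset.sum_congr rfl fun i _ => rfl
    have hsumsqκ : ∑ i, κ i ^ 2 = R ^ 2 * ∑ i, u i ^ 2 := by
      rw [hκRu, Finset.mul_sum]
      refine Finset.sum_congr rfl fun i _ => ?_
      have : (R • u) i = R * u i := rfl
      rw [this]
      ring
    rw [qid n κ, hsumκ, hsumsqκ, hFκ]
    nlinarith [mul_le_mul_of_nonneg_left h1 (sq_nonneg R)]
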